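/- Let p ∈ ℂ and let I ⊆ F be the two-sided ideal generated by the five elements x₂x₁ + x₁x₂, x₃x₁ + x₁x₃, x₃x₂ + x₂x₃ + p x₁x₂, x₁², and x₂². Then the images in F/I of the monomials x₁^{e₁} x₂^{e₂} x₃^{a₃}, over all e₁, e₂ ∈ {0, 1} and a₃ ∈ ℕ, form a ℂ-basis of F/I. (For a ≠ −p², this quotient is the Nichols algebra associated to the braiding of type R_{1,2} with t = −1 and b = −p; it has Gelfand–Kirillov dimension 1.) -/

import Mathlib

/-- The free associative unital `ℂ`-algebra on three generators. -/
abbrev F : Type := FreeAlgebra ℂ (Fin 3)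

/-- The generators `x₁ = X 0`, `x₂ = X 1`, `x₃ = X 2`. -/
noncomputable def X (i : Fin 3) : F := FreeAlgebra.ι ℂ i

/-- Generators: `x₂x₁ + x₁x₂`, `x₃x₁ + x₁x₃`, `x₃x₂ + x₂x₃ + p x₁x₂`, `x₁²`, `x₂²`. -/
noncomputable def S (p : ℂ) : Set F :=
  {X 1 * X 0 + X 0 * X 1,
   X 2 * X 0 + X 0 * X 2,
   X 2 * X 1 + X 1 * X 2 + p • (X 0 * X 1),
   X 0 * X 0,
   X 1 * X 1}

/-- The relation whose two-sided-ideal closure is the ideal generated by `S`;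
`RingQuot rel` is the quotient `F/I`. -/
def rel (p : ℂ) : F → F → Prop := fun x y => x ∈ S p ∧ y = 0

abbrev Idx : Type := Fin 2 × Fin 2 × ℕ
abbrev V : Type := Idx →₀ ℂ

noncomputable def f1 : Idx → V := fun e =>
  if e.1 = 0 then Finsupp.single (1, e.2.1, e.2.2) 1 else 0
noncomputable def f2 : Idx → V := fun e =>
  if e.2.1 = 0 then ((-1 : ℂ) ^ (e.1 : ℕ)) • Finsupp.single (e.1, 1, e.2.2) 1 else 0
noncomputable def f3 (p : ℂ) : Idx → V := fun e =>
  ((-1 : ℂ) ^ ((e.1 : ℕ) + (e.2.1 : ℕ))) • Finsupp.single (e.1, e.2.1, e.2.2 + 1) 1 +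
    (if e.1 = 0 ∧ e.2.1 = 1 then (-p) • Finsupp.single ((1 : Fin 2), (1 : Fin 2), e.2.2) 1 else 0)

noncomputable def A1 : Module.End ℂ V := Finsupp.lift V ℂ Idx f1
noncomputable def A2 : Module.End ℂ V := Finsupp.lift V ℂ Idx f2
noncomputable def A3 (p : ℂ) : Module.End ℂ V := Finsupp.lift V ℂ Idx (f3 p)

lemma lift_single (g : Idx → V) (e : Idx) (c : ℂ) :
    Finsupp.lift V ℂ Idx g (Finsupp.single e c) = c • g e := by
  simp [Finsupp.lift_apply, Finsupp.sum_single_index]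

lemma A1_single (e : Idx) (c : ℂ) : A1 (Finsupp.single e c) = c • f1 e := lift_single _ _ _
lemma A2_single (e : Idx) (c : ℂ) : A2 (Finsupp.single e c) = c • f2 e := lift_single _ _ _
lemma A3_single (p : ℂ) (e : Idx) (c : ℂ) : A3 p (Finsupp.single e c) = c • f3 p e :=
  lift_single _ _ _

lemma endext {T T' : Module.End ℂ V} (h : ∀ e : Idx, T (Finsupp.single e 1) = T' (Finsupp.single e 1)) :
    T = T' := by
  apply Finsupp.lhom_ext
  intro a b
  have : (Finsupp.single a b : V) = b • Finsupp.single a 1 := by simp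
  rw [this, map_smul, map_smul, h]

lemma rel21 : A2 * A1 + A1 * A2 = 0 := by
  apply endext; intro ⟨e, f, a⟩
  fin_cases e <;> fin_cases f <;>
    simp [Module.End.mul_apply, A1_single, A2_single, f1, f2]

lemma rel31 (p : ℂ) : A3 p * A1 + A1 * A3 p = 0 := by
  apply endext; intro ⟨e, f, a⟩
  fin_cases e <;> fin_cases f <;>
    simp [Module.End.mul_apply, A1_single, A3_single, f1, f3]

lemma rel32 (p : ℂ) : A3 p * A2 + A2 * A3 p + p • (A1 * A2) = 0 := by
  apply endext; intro ⟨e, f, a⟩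
  fin_cases e <;> fin_cases f <;>
    simp [Module.End.mul_apply, A1_single, A2_single, A3_single, f1, f2, f3, smul_smul]

lemma rel11 : A1 * A1 = 0 := by
  apply endext; intro ⟨e, f, a⟩
  fin_cases e <;> simp [Module.End.mul_apply, A1_single, f1]

lemma rel22 : A2 * A2 = 0 := by
  apply endext; intro ⟨e, f, a⟩
  fin_cases f <;> simp [Module.End.mul_apply, A2_single, f2]

noncomputable def Φ (p : ℂ) : F →ₐ[ℂ] Module.End ℂ V :=
  FreeAlgebra.lift ℂ ![A1, A2, A3 p]

lemma Φ_X0 (p : ℂ) : Φ p (X 0) = A1 := by simp [Φ, X]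
lemma Φ_X1 (p : ℂ) : Φ p (X 1) = A2 := by simp [Φ, X]
lemma Φ_X2 (p : ℂ) : Φ p (X 2) = A3 p := by simp [Φ, X]

lemma Φ_rel (p : ℂ) : ∀ ⦃x y : F⦄, rel p x y → Φ p x = Φ p y := by
  rintro x y ⟨hx, rfl⟩
  rw [map_zero]
  simp only [S, Set.mem_insert_iff, Set.mem_singleton_iff] at hx
  rcases hx with rfl | rfl | rfl | rfl | rfl <;>
    simp only [map_add, map_mul, map_smul, Φ_X0, Φ_X1, Φ_X2]
  · exact rel21
  · exact rel31 p
  · exact rel32 p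
  · exact rel11
  · exact rel22

noncomputable def Ψ (p : ℂ) : RingQuot (rel p) →ₐ[ℂ] Module.End ℂ V :=
  RingQuot.liftAlgHom ℂ ⟨Φ p, Φ_rel p⟩

lemma Ψ_mk (p : ℂ) (w : F) : Ψ p (RingQuot.mkAlgHom ℂ (rel p) w) = Φ p w := by
  simp [Ψ, RingQuot.liftAlgHom_mkAlgHom_apply]

lemma A3_pow (p : ℂ) (a : ℕ) :
    (A3 p ^ a) (Finsupp.single ((0:Fin 2), (0:Fin 2), (0:ℕ)) 1)
      = Finsupp.single ((0:Fin 2), (0:Fin 2), a) 1 := by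
  induction a with
  | zero => simp
  | succ n ih => rw [pow_succ', Module.End.mul_apply, ih, A3_single]; simp [f3]

lemma eval_monomial (p : ℂ) (e f : Fin 2) (a : ℕ) :
    (Φ p (X 0 ^ (e : ℕ) * X 1 ^ (f : ℕ) * X 2 ^ a)) (Finsupp.single ((0:Fin 2), (0:Fin 2), (0:ℕ)) 1)
      = Finsupp.single (e, f, a) 1 := by
  simp only [map_mul, map_pow, Φ_X0, Φ_X1, Φ_X2, Module.End.mul_apply, A3_pow]
  fin_cases e <;> fin_cases f <;>
    simp [A1_single, A2_single, f1, f2]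

section Span

variable (p : ℂ)

local notation "q" => RingQuot.mkAlgHom ℂ (rel p)

lemma q_rel {s : F} (hs : s ∈ S p) : q s = 0 := by
  have : rel p s 0 := ⟨hs, rfl⟩
  have h2 := RingQuot.mkAlgHom_rel ℂ this
  simpa using h2

lemma q21 (z : RingQuot (rel p)) :
    q (X 1) * (q (X 0) * z) = -(q (X 0) * (q (X 1) * z)) := by
  have := q_rel p (show X 1 * X 0 + X 0 * X 1 ∈ S p by simp [S])
  rw [map_add, map_mul, map_mul] at this
  have h0 := congrArg (· * z) this
  simp only [add_mul, zero_mul, mul_assoc] at h0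
  exact eq_neg_of_add_eq_zero_left h0

lemma q31 (z : RingQuot (rel p)) :
    q (X 2) * (q (X 0) * z) = -(q (X 0) * (q (X 2) * z)) := by
  have := q_rel p (show X 2 * X 0 + X 0 * X 2 ∈ S p by simp [S])
  rw [map_add, map_mul, map_mul] at this
  have h0 := congrArg (· * z) this
  simp only [add_mul, zero_mul, mul_assoc] at h0
  exact eq_neg_of_add_eq_zero_left h0

lemma q32 (z : RingQuot (rel p)) :
    q (X 2) * (q (X 1) * z)
      = -(q (X 1) * (q (X 2) * z) + p • (q (X 0) * (q (X 1) * z))) := by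
  have := q_rel p (show X 2 * X 1 + X 1 * X 2 + p • (X 0 * X 1) ∈ S p by simp [S])
  rw [map_add, map_add, map_smul, map_mul, map_mul, map_mul, add_assoc] at this
  have h0 := congrArg (· * z) this
  simp only [add_mul, zero_mul, mul_assoc, smul_mul_assoc] at h0
  exact eq_neg_of_add_eq_zero_left h0

lemma q11 (z : RingQuot (rel p)) : q (X 0) * (q (X 0) * z) = 0 := by
  have := q_rel p (show X 0 * X 0 ∈ S p by simp [S])
  rw [map_mul] at this
  rw [← mul_assoc, this, zero_mul]

lemma q22 (z : RingQuot (rel p)) : q (X 1) * (q (X 1) * z) = 0 := by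
  have := q_rel p (show X 1 * X 1 ∈ S p by simp [S])
  rw [map_mul] at this
  rw [← mul_assoc, this, zero_mul]

end Span

section Main

variable (p : ℂ)

local notation "q" => RingQuot.mkAlgHom ℂ (rel p)

noncomputable def g : Idx → RingQuot (rel p) := fun e =>
  RingQuot.mkAlgHom ℂ (rel p) (X 0 ^ (e.1 : ℕ) * X 1 ^ (e.2.1 : ℕ) * X 2 ^ e.2.2)

noncomputable def M : Submodule ℂ (RingQuot (rel p)) := Submodule.span ℂ (Set.range (g p))

lemma gmem (e : Idx) : g p e ∈ M p := Submodule.subset_span (Set.mem_range_self e)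

lemma gen_mul_mem (i : Fin 3) (e : Idx) : q (X i) * g p e ∈ M p := by
  obtain ⟨e1, e2, a⟩ := e
  have gm : ∀ e1' e2' : Fin 2, ∀ a' : ℕ,
      (RingQuot.mkAlgHom ℂ (rel p)) (X 0 ^ (e1' : ℕ) * X 1 ^ (e2' : ℕ) * X 2 ^ a') ∈ M p :=
    fun e1' e2' a' => gmem p (e1', e2', a')
  fin_cases i <;> fin_cases e1 <;> fin_cases e2 <;>
      simp only [g, map_mul, map_pow, pow_zero, pow_one, one_mul, mul_one, mul_assoc,
        Fin.isValue, Fin.val_zero, Fin.val_one, Fin.mk_zero, Fin.mk_one,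
        show ((⟨2, by norm_num⟩ : Fin 3) : Fin 3) = 2 from rfl]
  -- i = 0
  · simpa using gm 1 0 a
  · simpa [mul_assoc] using gm 1 1 a
  · rw [q11]; exact zero_mem _
  · rw [q11]; exact zero_mem _
  -- i = 1
  · simpa using gm 0 1 a
  · rw [q22]; exact zero_mem _
  · rw [q21]; exact neg_mem (by simpa [mul_assoc] using gm 1 1 a)
  · rw [q21, q22, mul_zero, neg_zero]; exact zero_mem _
  -- i = 2
  · simpa [pow_succ'] using gm 0 0 (a + 1)
  · rw [q32]
    refine neg_mem (add_mem ?_ (Submodule.smul_mem _ _ ?_))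
    · simpa [pow_succ', mul_assoc] using gm 0 1 (a + 1)
    · simpa [mul_assoc] using gm 1 1 a
  · rw [q31]; exact neg_mem (by simpa [pow_succ', mul_assoc] using gm 1 0 (a + 1))
  · have mn : ∀ x y : RingQuot (rel p), x * -y = -(x * y) := fun x y => by
      rw [← neg_one_smul ℂ y, mul_smul_comm, neg_one_smul]
    rw [q31, q32, mn, neg_neg, mul_add, mul_smul_comm, q11, smul_zero, add_zero]
    simpa [pow_succ', mul_assoc] using gm 1 1 (a + 1)

lemma key_mul (w : F) : ∀ y ∈ M p, q w * y ∈ M p := by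
  refine FreeAlgebra.induction ℂ (Fin 3) (motive := fun w => ∀ y ∈ M p, q w * y ∈ M p)
      ?_ ?_ ?_ ?_ w
  · intro r y hy
    rw [AlgHom.commutes, ← Algebra.smul_def]
    exact (M p).smul_mem r hy
  · intro i y hy
    refine Submodule.span_induction ?_ ?_ ?_ ?_ hy
    · rintro _ ⟨e, rfl⟩
      exact gen_mul_mem p i e
    · rw [mul_zero]; exact zero_mem _
    · intro x y _ _ hx hy
      rw [mul_add]; exact add_mem hx hy
    · intro c x _ hx
      rw [mul_smul_comm]; exact (M p).smul_mem c hx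
  · intro a b ha hb y hy
    rw [map_mul, mul_assoc]
    exact ha _ (hb _ hy)
  · intro a b ha hb y hy
    rw [map_add, add_mul]
    exact add_mem (ha _ hy) (hb _ hy)

end Main


/-- the images in `F/I` of the monomials `x₁^{e₁} x₂^{e₂} x₃^{a₃}`, `e₁, e₂ ∈ {0,1}`, `a₃ ∈ ℕ`, form a `ℂ`-basis. -/
theorem basis_R12_t_neg_one_b_eq (p : ℂ) :
    LinearIndependent ℂ (fun e : Fin 2 × Fin 2 × ℕ =>
      RingQuot.mkAlgHom ℂ (rel p) (X 0 ^ (e.1 : ℕ) * X 1 ^ (e.2.1 : ℕ) * X 2 ^ e.2.2)) ∧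
    Submodule.span ℂ (Set.range (fun e : Fin 2 × Fin 2 × ℕ =>
      RingQuot.mkAlgHom ℂ (rel p) (X 0 ^ (e.1 : ℕ) * X 1 ^ (e.2.1 : ℕ) * X 2 ^ e.2.2))) = ⊤ := by
  constructor
  · set L : RingQuot (rel p) →ₗ[ℂ] V :=
      (LinearMap.applyₗ (Finsupp.single ((0 : Fin 2), (0 : Fin 2), (0 : ℕ)) 1)).comp
        (Ψ p).toLinearMap with hL
    refine LinearIndependent.of_comp L ?_
    have : ⇑L ∘ (fun e : Fin 2 × Fin 2 × ℕ =>
        RingQuot.mkAlgHom ℂ (rel p) (X 0 ^ (e.1 : ℕ) * X 1 ^ (e.2.1 : ℕ) * X 2 ^ e.2.2))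
        = fun e : Idx => Finsupp.single e 1 := by
      funext e
      obtain ⟨e1, e2, a⟩ := e
      show L _ = _
      rw [hL, LinearMap.comp_apply, AlgHom.toLinearMap_apply, Ψ_mk]
      exact eval_monomial p e1 e2 a
    rw [this, ← Finsupp.coe_basisSingleOne (R := ℂ) (ι := Idx)]
    exact Finsupp.basisSingleOne.linearIndependent
  · rw [eq_top_iff]
    rintro z -
    obtain ⟨w, rfl⟩ := RingQuot.mkAlgHom_surjective ℂ (rel p) z
    have h1 : (1 : RingQuot (rel p)) ∈ M p := by
      simpa [g] using gmem p ((0 : Fin 2), (0 : Fin 2), (0 : ℕ))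
    have := key_mul p w 1 h1
    rw [mul_one] at this
    exact this
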